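/- Let R_0 = Σ_{k∈K} q_k R_k > 1, let Θ^* ∈ (0,1) satisfy Σ_{k∈K} q_k R_k/(1+Θ^* R_k) = 1, and set Θ^0 = 1 − 1/R_0. Then Θ^* ≤ Θ^0, and Θ^* = Θ^0 holds if and only if R_k = R_0 for every k with q_k > 0. In particular, if there exists k ∈ K with q_k > 0 and R_k ≠ R_0, then Θ^* < Θ^0: heterogeneity in the R_k strictly lowers the endemic prevalence at fixed R_0. -/

import Mathlib

lemma aux_point (R₀ x : ℝ) (hR₀ : 1 < R₀) (hx : 0 < x) :
    x / (1 + (1 - 1/R₀) * x) ≤ 1 + (x - R₀)/R₀^2 := by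
  have hR0 : (0:ℝ) < R₀ := by linarith
  have hΘ : (0:ℝ) < 1 - 1/R₀ := by
    have : 1/R₀ < 1 := by rw [div_lt_one hR0]; linarith
    linarith
  have h1 : 0 < 1 + (1 - 1/R₀) * x := by positivity
  rw [div_le_iff₀ h1]
  have key : (1 + (x - R₀)/R₀^2) * (1 + (1 - 1/R₀) * x) - x
      = (1 - 1/R₀) * (x - R₀)^2 / R₀^2 := by
    field_simp
    ring
  nlinarith [sq_nonneg (x - R₀), div_nonneg (mul_nonneg hΘ.le (sq_nonneg (x - R₀))) (sq_nonneg R₀)]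

lemma aux_point_strict (R₀ x : ℝ) (hR₀ : 1 < R₀) (hx : 0 < x) (hne : x ≠ R₀) :
    x / (1 + (1 - 1/R₀) * x) < 1 + (x - R₀)/R₀^2 := by
  have hR0 : (0:ℝ) < R₀ := by linarith
  have hΘ : (0:ℝ) < 1 - 1/R₀ := by
    have : 1/R₀ < 1 := by rw [div_lt_one hR0]; linarith
    linarith
  have h1 : 0 < 1 + (1 - 1/R₀) * x := by positivity
  rw [div_lt_iff₀ h1]
  have key : (1 + (x - R₀)/R₀^2) * (1 + (1 - 1/R₀) * x) - x
      = (1 - 1/R₀) * (x - R₀)^2 / R₀^2 := by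
    field_simp
    ring
  have hsub : x - R₀ ≠ 0 := sub_ne_zero.mpr hne
  have hsq : 0 < (x - R₀)^2 := by positivity
  nlinarith [div_pos (mul_pos hΘ hsq) (pow_pos hR0 2)]

/-- The fixed-point map is strictly decreasing in `Θ`. -/
lemma aux_mono {K : Type*} [Fintype K] (q R : K → ℝ) (hq : ∀ k, 0 ≤ q k)
    (hR : ∀ k, 0 < R k) (k0 : K) (hk0 : 0 < q k0)
    (a b : ℝ) (ha : 0 < a) (hab : a < b) :
    ∑ k, q k * R k / (1 + b * R k) < ∑ k, q k * R k / (1 + a * R k) := by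
  apply Finset.sum_lt_sum
  · intro k _
    have h1 : 0 < 1 + a * R k := by nlinarith [hR k, mul_pos ha (hR k)]
    have h2 : 1 + a * R k ≤ 1 + b * R k := by nlinarith [hR k]
    gcongr
    exact mul_nonneg (hq k) (hR k).le
  · refine ⟨k0, Finset.mem_univ k0, ?_⟩
    have hpos : 0 < q k0 * R k0 := mul_pos hk0 (hR k0)
    have h1 : 0 < 1 + a * R k0 := by nlinarith [hR k0, mul_pos ha (hR k0)]
    have h2 : 1 + a * R k0 < 1 + b * R k0 := by nlinarith [hR k0]
    exact div_lt_div_of_pos_left hpos h1 h2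

/-- Heterogeneity in the `R_k` at fixed `R₀ = Σ q_k R_k` lowers the endemic
prevalence: `Θ* ≤ Θ⁰ = 1 - 1/R₀`, with equality iff `R_k = R₀` on the support
of `q`; strict inequality under genuine heterogeneity. -/
theorem heterogeneity_strictly_lowers_prevalence {K : Type*} [Fintype K] [Nonempty K]
    (q R : K → ℝ) (hq : ∀ k, 0 ≤ q k) (hqsum : ∑ k, q k = 1) (hR : ∀ k, 0 < R k)
    (R₀ : ℝ) (hR₀ : R₀ = ∑ k, q k * R k) (hR₀gt : 1 < R₀)
    (Θstar : ℝ) (hΘstar : Θstar ∈ Set.Ioo (0:ℝ) 1)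
    (hfix : ∑ k, q k * R k / (1 + Θstar * R k) = 1)
    (Θ0 : ℝ) (hΘ0 : Θ0 = 1 - 1 / R₀) :
    Θstar ≤ Θ0 ∧
    (Θstar = Θ0 ↔ ∀ k, 0 < q k → R k = R₀) ∧
    ((∃ k, 0 < q k ∧ R k ≠ R₀) → Θstar < Θ0) := by
  obtain ⟨hΘs_pos, hΘs_lt⟩ := hΘstar
  have hR0pos : (0:ℝ) < R₀ := by linarith
  have hR0ne : R₀ ≠ 0 := ne_of_gt hR0pos
  have hΘ0pos : 0 < Θ0 := by
    rw [hΘ0]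
    have : 1/R₀ < 1 := by rw [div_lt_one hR0pos]; linarith
    linarith
  -- a witness with q k0 > 0
  have hk0 : ∃ k0, 0 < q k0 := by
    by_contra h
    push_neg at h
    have : ∑ k, q k ≤ 0 := Finset.sum_nonpos fun k _ => h k
    linarith
  obtain ⟨k0, hk0⟩ := hk0
  -- the tangent-line sum equals 1
  have hsum2 : ∑ k, q k * (1 + (R k - R₀)/R₀^2) = 1 := by
    have step : ∀ k ∈ Finset.univ,
        q k * (1 + (R k - R₀)/R₀^2) = (1 - 1/R₀) * q k + (1/R₀^2) * (q k * R k) := by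
      intro k _
      field_simp
      ring
    rw [Finset.sum_congr rfl step, Finset.sum_add_distrib, ← Finset.mul_sum, ← Finset.mul_sum,
      hqsum, ← hR₀]
    field_simp
    ring
  -- the value of the fixed-point map at Θ0 is ≤ 1
  have hle : ∑ k, q k * R k / (1 + Θ0 * R k) ≤ 1 := by
    calc ∑ k, q k * R k / (1 + Θ0 * R k)
        ≤ ∑ k, q k * (1 + (R k - R₀)/R₀^2) := by
          apply Finset.sum_le_sum
          intro k _
          rw [mul_div_assoc]
          have := aux_point R₀ (R k) hR₀gt (hR k)
          rw [← hΘ0] at this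
          exact mul_le_mul_of_nonneg_left this (hq k)
      _ = 1 := hsum2
  -- strict version under heterogeneity
  have hlt : (∃ k, 0 < q k ∧ R k ≠ R₀) → ∑ k, q k * R k / (1 + Θ0 * R k) < 1 := by
    rintro ⟨j, hj, hjne⟩
    calc ∑ k, q k * R k / (1 + Θ0 * R k)
        < ∑ k, q k * (1 + (R k - R₀)/R₀^2) := by
          apply Finset.sum_lt_sum
          · intro k _
            rw [mul_div_assoc]
            have := aux_point R₀ (R k) hR₀gt (hR k)
            rw [← hΘ0] at this
            exact mul_le_mul_of_nonneg_left this (hq k)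
          · refine ⟨j, Finset.mem_univ j, ?_⟩
            rw [mul_div_assoc]
            have := aux_point_strict R₀ (R j) hR₀gt (hR j) hjne
            rw [← hΘ0] at this
            exact mul_lt_mul_of_pos_left this hj
      _ = 1 := hsum2
  -- main inequality
  have hmain : Θstar ≤ Θ0 := by
    by_contra h
    push_neg at h
    have := aux_mono q R hq hR k0 hk0 Θ0 Θstar hΘ0pos h
    rw [hfix] at this
    linarith
  -- strict inequality under heterogeneity
  have hstrict : (∃ k, 0 < q k ∧ R k ≠ R₀) → Θstar < Θ0 := by
    intro hhet
    rcases lt_or_eq_of_le hmain with h | h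
    · exact h
    · exfalso
      have := hlt hhet
      rw [← h, hfix] at this
      exact lt_irrefl 1 this
  refine ⟨hmain, ⟨?_, ?_⟩, hstrict⟩
  · -- equality → homogeneity
    intro heq k hk
    by_contra hne
    exact absurd heq (ne_of_lt (hstrict ⟨k, hk, hne⟩))
  · -- homogeneity → equality
    intro hhom
    -- under homogeneity the map at Θ0 equals 1
    have hval : ∑ k, q k * R k / (1 + Θ0 * R k) = 1 := by
      calc ∑ k, q k * R k / (1 + Θ0 * R k) = ∑ k, q k := by
            apply Finset.sum_congr rfl
            intro k _
            rcases eq_or_lt_of_le (hq k) with h0 | h0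
            · simp [← h0]
            · rw [hhom k h0, hΘ0]
              have hden : 1 + (1 - 1/R₀) * R₀ = R₀ := by field_simp; ring
              rw [hden, mul_div_assoc, div_self hR0ne, mul_one]
        _ = 1 := hqsum
    rcases lt_or_eq_of_le hmain with h | h
    · exfalso
      have := aux_mono q R hq hR k0 hk0 Θstar Θ0 hΘs_pos h
      rw [hfix, hval] at this
      exact lt_irrefl 1 this
    · exact h
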